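/- arXiv:2306.11138 — 2 statements merged into one kernel-verified Lean document; each statement's English description precedes it below -/
import Mathlib

section
/- Let A be a tridiagonal bounded operator on ℓ²(ℤ,ℂ) with diagonals α, β, γ ∈ ℓ^∞(ℤ) and let ν_n(A) := inf{‖Ax‖ : ‖x‖ = 1 and supp x ⊆ k + {1,…,n} for some k ∈ ℤ}. Then ν_n(A) converges to ν(A) as n → ∞. -/
noncomputable section

/-- The lower norm `ν(B) = inf {‖Bx‖ : ‖x‖ = 1}` of a bounded operator. -/
def lowerNorm {E F : Type*} [NormedAddCommGroup E] [NormedAddCommGroup F]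
    [NormedSpace ℂ E] [NormedSpace ℂ F] (B : E →L[ℂ] F) : ℝ :=
  sInf {r : ℝ | ∃ x : E, ‖x‖ = 1 ∧ r = ‖B x‖}

abbrev L2Z : Type := lp (fun _ : ℤ => ℂ) 2

/-- Matrix entry `A_{i,j} = ⟨e_i, A e_j⟩` of an operator on `ℓ²(ℤ)`. -/
def ent (A : L2Z →L[ℂ] L2Z) (i j : ℤ) : ℂ :=
  (inner ℂ (lp.single 2 i (1:ℂ)) (A (lp.single 2 j 1)) : ℂ)

/-- `A` is tridiagonal with subdiagonal α, main diagonal β and superdiagonal γ. -/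
def IsTridiag (A : L2Z →L[ℂ] L2Z) (α β γ : lp (fun _ : ℤ => ℂ) ⊤) : Prop :=
  (∀ i : ℤ, ent A (i+1) i = α i) ∧ (∀ i : ℤ, ent A i i = β i) ∧
    (∀ i : ℤ, ent A (i-1) i = γ i) ∧ ∀ i j : ℤ, 1 < |i - j| → ent A i j = 0

/-- `ε_n = 2(‖α‖_∞ + ‖γ‖_∞) sin(π/(2(n+1)))`. -/
def epsn (α γ : lp (fun _ : ℤ => ℂ) ⊤) (n : ℕ) : ℝ :=
  2 * (‖α‖ + ‖γ‖) * Real.sin (Real.pi / (2 * (n + 1)))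

/-- `ν_n(A) = inf {‖Ax‖ : ‖x‖ = 1, supp x ⊆ k + {1,…,n} for some k ∈ ℤ}`. -/
def nuN (A : L2Z →L[ℂ] L2Z) (n : ℕ) : ℝ :=
  sInf {r : ℝ | ∃ (x : L2Z) (k : ℤ), ‖x‖ = 1 ∧
    (∀ i : ℤ, x i ≠ 0 → k < i ∧ i ≤ k + n) ∧ r = ‖A x‖}

/-! ### Auxiliary lemmas -/

lemma rpow_two' (x : ℝ) : x ^ ((2:ENNReal)).toReal = x ^ 2 := by
  rw [show ((2:ENNReal)).toReal = ((2:ℕ):ℝ) by norm_num, Real.rpow_natCast]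

lemma normSq_eq (f : L2Z) : ‖f‖ ^ 2 = ∑' i, ‖f i‖ ^ 2 := by
  have h := lp.norm_rpow_eq_tsum (p := 2) (by norm_num) f
  simp only [rpow_two'] at h
  exact h

lemma summable_normSq (f : L2Z) : Summable fun i : ℤ => ‖f i‖ ^ 2 := by
  have h := (lp.memℓp f).summable (p := 2) (by norm_num)
  simpa only [rpow_two'] using h

/-- real ℓ² element from a square-summable sequence -/
def toL2R (a : ℤ → ℝ) (h : Summable fun k => a k ^ 2) : lp (fun _ : ℤ => ℝ) 2 :=
  ⟨a, memℓp_gen (by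
    simp only [rpow_two', Real.norm_eq_abs, sq_abs]
    exact h)⟩

lemma toL2R_norm (a : ℤ → ℝ) (h : Summable fun k => a k ^ 2) :
    ‖toL2R a h‖ = Real.sqrt (∑' k, a k ^ 2) := by
  have h2 := lp.norm_rpow_eq_tsum (p := 2) (by norm_num) (toL2R a h)
  simp only [rpow_two'] at h2
  have hc : ∀ k : ℤ, ‖(toL2R a h) k‖ ^ 2 = a k ^ 2 := fun k => by
    show |a k| ^ 2 = _; rw [sq_abs]
  rw [tsum_congr hc] at h2
  rw [← h2, Real.sqrt_sq (norm_nonneg _)]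

lemma summable_add_sq {a b : ℤ → ℝ} (ha : Summable fun k => a k ^ 2)
    (hb : Summable fun k => b k ^ 2) : Summable fun k => (a k + b k) ^ 2 := by
  have : ∀ k, (a k + b k) ^ 2 ≤ 2 * a k ^ 2 + 2 * b k ^ 2 := fun k => by
    nlinarith [sq_nonneg (a k - b k)]
  exact Summable.of_nonneg_of_le (fun k => sq_nonneg _) this (((ha.mul_left 2)).add (hb.mul_left 2))

lemma minkowski {a b : ℤ → ℝ} (ha : Summable fun k => a k ^ 2)
    (hb : Summable fun k => b k ^ 2) :
    Real.sqrt (∑' k, (a k + b k) ^ 2) ≤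
      Real.sqrt (∑' k, a k ^ 2) + Real.sqrt (∑' k, b k ^ 2) := by
  have key : toL2R (fun k => a k + b k) (summable_add_sq ha hb) = toL2R a ha + toL2R b hb := by
    apply lp.ext
    rw [lp.coeFn_add]
    rfl
  have := norm_add_le (toL2R a ha) (toL2R b hb)
  rw [← key] at this
  simpa only [toL2R_norm] using this

/-- evaluation at a coordinate as a CLM -/
def evalCLM (i : ℤ) : L2Z →L[ℂ] ℂ :=
  LinearMap.mkContinuous
    { toFun := fun f => f i
      map_add' := fun f g => by simp [lp.coeFn_add]
      map_smul' := fun c f => by simp [lp.coeFn_smul] } 1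
    (fun f => by rw [one_mul]; exact lp.norm_apply_le_norm (by norm_num) f i)

lemma ent_eq (A : L2Z →L[ℂ] L2Z) (i j : ℤ) : ent A i j = (A (lp.single 2 j 1)) i := by
  rw [ent, lp.inner_single_left]
  simp

lemma apply_coord (A : L2Z →L[ℂ] L2Z) (α β γ : lp (fun _ : ℤ => ℂ) ⊤)
    (hA : IsTridiag A α β γ) (x : L2Z) (i : ℤ) :
    (A x) i = α (i-1) * x (i-1) + β i * x i + γ (i+1) * x (i+1) := by
  have hs : HasSum (fun j : ℤ => lp.single 2 j (x j)) x := lp.hasSum_single (by norm_num) x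
  have hs2 : HasSum (fun j : ℤ => (evalCLM i) (A (lp.single 2 j (x j)))) ((evalCLM i) (A x)) :=
    ((evalCLM i).comp A).hasSum hs
  have hval : ∀ j : ℤ, (evalCLM i) (A (lp.single 2 j (x j))) = ent A i j * x j := by
    intro j
    have : lp.single 2 j (x j) = x j • (lp.single 2 j (1:ℂ) : L2Z) := by
      rw [← lp.single_smul]; norm_num
    rw [this, map_smul, map_smul]
    show x j • (A (lp.single 2 j 1)) i = _
    rw [← ent_eq]
    simp [mul_comm]
  rw [funext hval] at hs2
  have hzero : ∀ j : ℤ, j ∉ ({i-1, i, i+1} : Finset ℤ) → ent A i j * x j = 0 := by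
    intro j hj
    have : 1 < |i - j| := by
      simp only [Finset.mem_insert, Finset.mem_singleton] at hj
      push_neg at hj
      rw [lt_abs]
      omega
    rw [hA.2.2.2 i j this, zero_mul]
  have h3 : HasSum (fun j : ℤ => ent A i j * x j)
      (∑ j ∈ ({i-1, i, i+1} : Finset ℤ), ent A i j * x j) :=
    hasSum_sum_of_ne_finset_zero hzero
  have heq := hs2.unique h3
  show (A x) i = _
  rw [show ((evalCLM i) (A x)) = (A x) i from rfl] at heq
  rw [heq]
  rw [Finset.sum_insert (by simp only [Finset.mem_insert, Finset.mem_singleton]; omega),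
    Finset.sum_insert (by simp only [Finset.mem_singleton]; omega), Finset.sum_singleton]
  have e1 : ent A i (i-1) = α (i-1) := by have := hA.1 (i-1); simpa using this
  have e2 : ent A i i = β i := hA.2.1 i
  have e3 : ent A i (i+1) = γ (i+1) := by have := hA.2.2.1 (i+1); simpa using this
  rw [e1, e2, e3]
  ring

/-- truncation of `x` to the window `(k, k+n]` -/
def trunc (n : ℕ) (k : ℤ) (x : L2Z) : L2Z :=
  ⟨fun i => if k < i ∧ i ≤ k + n then x i else 0,
    (memℓp_zero (by
      apply Set.Finite.subset (Set.finite_Icc (k+1) (k+n))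
      intro i hi
      simp only [Set.mem_setOf_eq] at hi
      by_contra hmem
      simp only [Set.mem_Icc] at hmem
      exact hi (by rw [if_neg (by omega)]))).of_exponent_ge (by norm_num)⟩

lemma trunc_apply (n : ℕ) (k : ℤ) (x : L2Z) (i : ℤ) :
    (trunc n k x) i = if k < i ∧ i ≤ k + n then x i else 0 := rfl

lemma trunc_normSq (n : ℕ) (k : ℤ) (x : L2Z) :
    ‖trunc n k x‖ ^ 2 = ∑ m ∈ Finset.Icc (1:ℤ) (n:ℤ), ‖x (k + m)‖ ^ 2 := by
  rw [normSq_eq]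
  rw [tsum_eq_sum (s := Finset.Icc (k+1) (k+(n:ℤ))) (by
    intro i hi
    simp only [Finset.mem_Icc] at hi
    rw [trunc_apply, if_neg (by omega)]
    simp)]
  rw [show Finset.Icc (k+1) (k+(n:ℤ)) = Finset.map (addLeftEmbedding k) (Finset.Icc 1 (n:ℤ)) by
    rw [Finset.map_add_left_Icc], Finset.sum_map]
  refine Finset.sum_congr rfl fun m hm => ?_
  simp only [Finset.mem_Icc] at hm
  rw [show (addLeftEmbedding k) m = k + m from rfl, trunc_apply, if_pos (by omega)]

lemma summable_shift (x : L2Z) (m : ℤ) : Summable fun k : ℤ => ‖x (k + m)‖ ^ 2 :=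
  ((Equiv.addRight m).summable_iff (f := fun i : ℤ => ‖x i‖ ^ 2)).mpr (summable_normSq x)

lemma tsum_shift (x : L2Z) (m : ℤ) : ∑' k : ℤ, ‖x (k + m)‖ ^ 2 = ‖x‖ ^ 2 := by
  rw [normSq_eq]
  exact (Equiv.addRight m).tsum_eq (fun i : ℤ => ‖x i‖ ^ 2)

lemma summable_trunc_normSq (n : ℕ) (x : L2Z) :
    Summable fun k : ℤ => ‖trunc n k x‖ ^ 2 := by
  simp only [trunc_normSq]
  exact summable_sum fun m _ => summable_shift x m

lemma tsum_trunc_normSq (n : ℕ) (x : L2Z) :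
    ∑' k : ℤ, ‖trunc n k x‖ ^ 2 = (n : ℝ) * ‖x‖ ^ 2 := by
  simp only [trunc_normSq]
  rw [Summable.tsum_finsetSum (fun m _ => summable_shift x m)]
  rw [Finset.sum_congr rfl (fun m _ => tsum_shift x m), Finset.sum_const, Int.card_Icc]
  simp

lemma single_apply' (i j : ℤ) (a : ℂ) :
    (lp.single (E := fun _ : ℤ => ℂ) 2 i a) j = if j = i then a else 0 := by
  rw [lp.single_apply]
  by_cases h : j = i
  · subst h; simp
  · simp [h]

lemma norm_single' (i : ℤ) (c : ℂ) : ‖lp.single (E := fun _ : ℤ => ℂ) 2 i c‖ = ‖c‖ := by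
  simpa using lp.norm_single (E := fun _ : ℤ => ℂ) (p := 2) (by norm_num) (fun _ => c) i

set_option maxHeartbeats 3200000 in
lemma commutator_eq (A : L2Z →L[ℂ] L2Z) (α β γ : lp (fun _ : ℤ => ℂ) ⊤)
    (hA : IsTridiag A α β γ) (x : L2Z) (n : ℕ) (hn : 1 ≤ n) (k : ℤ) :
    A (trunc n k x) = trunc n k (A x)
      + lp.single 2 k (γ (k+1) * x (k+1))
      - lp.single 2 (k+1) (α k * x k)
      - lp.single 2 (k+(n:ℤ)) (γ (k+(n:ℤ)+1) * x (k+(n:ℤ)+1))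
      + lp.single 2 (k+(n:ℤ)+1) (α (k+(n:ℤ)) * x (k+(n:ℤ))) := by
  apply lp.ext
  funext i
  have lhs := apply_coord A α β γ hA (trunc n k x) i
  have rhs0 := apply_coord A α β γ hA x i
  rw [lp.coeFn_add, lp.coeFn_sub, lp.coeFn_sub, lp.coeFn_add]
  simp only [Pi.add_apply, Pi.sub_apply]
  rw [lhs, trunc_apply, trunc_apply, trunc_apply, trunc_apply, rhs0]
  rw [single_apply', single_apply', single_apply', single_apply']
  split_ifs
  all_goals try omega
  all_goals subst_vars
  all_goals try ring
  all_goals try (simp only [add_sub_cancel_right] <;> ring)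
  all_goals (have hn1 : n = 1 := by omega)
  all_goals subst hn1
  all_goals push_cast
  all_goals ring

lemma lowerNorm_nonempty (A : L2Z →L[ℂ] L2Z) :
    {r : ℝ | ∃ x : L2Z, ‖x‖ = 1 ∧ r = ‖A x‖}.Nonempty :=
  ⟨‖A (lp.single 2 0 1)‖, lp.single 2 0 1, by rw [norm_single']; simp, rfl⟩

lemma lowerNorm_bdd (A : L2Z →L[ℂ] L2Z) :
    BddBelow {r : ℝ | ∃ x : L2Z, ‖x‖ = 1 ∧ r = ‖A x‖} :=
  ⟨0, fun r ⟨x, _, hr⟩ => hr ▸ norm_nonneg _⟩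

lemma nuN_bdd (A : L2Z →L[ℂ] L2Z) (n : ℕ) :
    BddBelow {r : ℝ | ∃ (x : L2Z) (k : ℤ), ‖x‖ = 1 ∧
      (∀ i : ℤ, x i ≠ 0 → k < i ∧ i ≤ k + n) ∧ r = ‖A x‖} :=
  ⟨0, fun r ⟨x, k, _, _, hr⟩ => hr ▸ norm_nonneg _⟩

lemma lowerNorm_le_nuN (A : L2Z →L[ℂ] L2Z) (n : ℕ) (hn : 1 ≤ n) :
    lowerNorm A ≤ nuN A n := by
  apply csInf_le_csInf (lowerNorm_bdd A)
  · refine ⟨‖A (lp.single 2 1 1)‖, lp.single 2 1 1, 0, by rw [norm_single']; simp, ?_, rfl⟩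
    intro i hi
    have : i = 1 := by
      by_contra h
      exact hi (lp.single_apply_ne 2 1 _ h)
    omega
  · rintro r ⟨x, k, hx, _, hr⟩
    exact ⟨x, hx, hr⟩

lemma norm_five (u1 u2 u3 u4 u5 : L2Z) :
    ‖u1 + u2 - u3 - u4 + u5‖ ≤ ‖u1‖ + ‖u2‖ + ‖u3‖ + ‖u4‖ + ‖u5‖ := by
  have h1 := norm_add_le (u1 + u2 - u3 - u4) u5
  have h2 := norm_sub_le (u1 + u2 - u3) u4
  have h3 := norm_sub_le (u1 + u2) u3
  have h4 := norm_add_le u1 u2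
  linarith

lemma coeff_bound (c : lp (fun _ : ℤ => ℂ) ⊤) (x : L2Z) (m : ℤ) :
    Summable (fun k : ℤ => ‖c (k + m) * x (k + m)‖ ^ 2) ∧
      ∑' k : ℤ, ‖c (k + m) * x (k + m)‖ ^ 2 ≤ ‖c‖ ^ 2 * ‖x‖ ^ 2 := by
  have hb : ∀ k : ℤ, ‖c (k + m) * x (k + m)‖ ^ 2 ≤ ‖c‖ ^ 2 * ‖x (k + m)‖ ^ 2 := by
    intro k
    rw [norm_mul, mul_pow]
    have h1 : ‖c (k + m)‖ ≤ ‖c‖ := lp.norm_apply_le_norm (by norm_num) c (k + m)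
    have h2 : ‖c (k + m)‖ ^ 2 ≤ ‖c‖ ^ 2 := by
      nlinarith [norm_nonneg (c (k + m))]
    nlinarith [sq_nonneg (‖x (k+m)‖), norm_nonneg (x (k+m))]
  have hsum : Summable (fun k : ℤ => ‖c‖ ^ 2 * ‖x (k + m)‖ ^ 2) :=
    (summable_shift x m).mul_left _
  have hs : Summable (fun k : ℤ => ‖c (k + m) * x (k + m)‖ ^ 2) :=
    Summable.of_nonneg_of_le (fun k => sq_nonneg _) hb hsum
  refine ⟨hs, ?_⟩
  calc ∑' k : ℤ, ‖c (k + m) * x (k + m)‖ ^ 2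
      ≤ ∑' k : ℤ, ‖c‖ ^ 2 * ‖x (k + m)‖ ^ 2 := Summable.tsum_le_tsum hb hs hsum
    _ = ‖c‖ ^ 2 * ∑' k : ℤ, ‖x (k + m)‖ ^ 2 := tsum_mul_left
    _ = ‖c‖ ^ 2 * ‖x‖ ^ 2 := by rw [tsum_shift]

lemma sqrt_coeff_bound (c : lp (fun _ : ℤ => ℂ) ⊤) (x : L2Z) (hx : ‖x‖ = 1) (m : ℤ) :
    Real.sqrt (∑' k : ℤ, ‖c (k + m) * x (k + m)‖ ^ 2) ≤ ‖c‖ := by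
  have h := (coeff_bound c x m).2
  rw [hx] at h
  calc Real.sqrt (∑' k : ℤ, ‖c (k + m) * x (k + m)‖ ^ 2)
      ≤ Real.sqrt (‖c‖ ^ 2 * 1 ^ 2) := Real.sqrt_le_sqrt h
    _ = ‖c‖ := by rw [one_pow, mul_one, Real.sqrt_sq (norm_nonneg _)]

set_option maxHeartbeats 1000000 in
lemma nuN_le_key (A : L2Z →L[ℂ] L2Z) (α β γ : lp (fun _ : ℤ => ℂ) ⊤)
    (hA : IsTridiag A α β γ) (n : ℕ) (hn : 1 ≤ n) (x : L2Z) (hx : ‖x‖ = 1) :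
    nuN A n ≤ ‖A x‖ + (2*‖α‖ + 2*‖γ‖) / Real.sqrt n := by
  have hn0 : (0:ℝ) < n := by exact_mod_cast hn
  have hsn : 0 < Real.sqrt n := Real.sqrt_pos.mpr hn0
  set C : ℝ := 2*‖α‖ + 2*‖γ‖ with hCdef
  have hCnn : 0 ≤ C := by positivity
  set s : ℝ := ‖A x‖ + C / Real.sqrt n with hsdef
  have hsnn : 0 ≤ s := by positivity
  -- the five bounding sequences
  set b1 : ℤ → ℝ := fun k => ‖trunc n k (A x)‖ with hb1
  set b2 : ℤ → ℝ := fun k => ‖γ (k+1) * x (k+1)‖ with hb2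
  set b3 : ℤ → ℝ := fun k => ‖α (k+0) * x (k+0)‖ with hb3
  set b4 : ℤ → ℝ := fun k => ‖γ (k+((n:ℤ)+1)) * x (k+((n:ℤ)+1))‖ with hb4
  set b5 : ℤ → ℝ := fun k => ‖α (k+(n:ℤ)) * x (k+(n:ℤ))‖ with hb5
  have hAyle : ∀ k : ℤ, ‖A (trunc n k x)‖ ≤ b1 k + b2 k + b3 k + b4 k + b5 k := by
    intro k
    rw [commutator_eq A α β γ hA x n hn k]
    refine le_trans (norm_five _ _ _ _ _) ?_
    rw [norm_single', norm_single', norm_single', norm_single']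
    simp only [hb1, hb2, hb3, hb4, hb5, add_zero]
    have e1 : k + ((n:ℤ)+1) = k + (n:ℤ) + 1 := by ring
    rw [e1]
  -- summability of the five squared sequences
  have sb1 : Summable fun k => b1 k ^ 2 := summable_trunc_normSq n (A x)
  have sb2 : Summable fun k => b2 k ^ 2 := (coeff_bound γ x 1).1
  have sb3 : Summable fun k => b3 k ^ 2 := (coeff_bound α x 0).1
  have sb4 : Summable fun k => b4 k ^ 2 := (coeff_bound γ x ((n:ℤ)+1)).1
  have sb5 : Summable fun k => b5 k ^ 2 := (coeff_bound α x (n:ℤ)).1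
  have sb45 : Summable fun k => (b4 k + b5 k) ^ 2 := summable_add_sq sb4 sb5
  have sb345 : Summable fun k => (b3 k + (b4 k + b5 k)) ^ 2 := summable_add_sq sb3 sb45
  have sb2345 : Summable fun k => (b2 k + (b3 k + (b4 k + b5 k))) ^ 2 := summable_add_sq sb2 sb345
  have sball : Summable fun k => (b1 k + (b2 k + (b3 k + (b4 k + b5 k)))) ^ 2 :=
    summable_add_sq sb1 sb2345
  -- sqrt-sum bounds
  have t1 : Real.sqrt (∑' k, b1 k ^ 2) = Real.sqrt n * ‖A x‖ := by
    rw [tsum_trunc_normSq n (A x), Real.sqrt_mul (le_of_lt hn0), Real.sqrt_sq (norm_nonneg _)]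
  have t2 : Real.sqrt (∑' k, b2 k ^ 2) ≤ ‖γ‖ := sqrt_coeff_bound γ x hx 1
  have t3 : Real.sqrt (∑' k, b3 k ^ 2) ≤ ‖α‖ := sqrt_coeff_bound α x hx 0
  have t4 : Real.sqrt (∑' k, b4 k ^ 2) ≤ ‖γ‖ := sqrt_coeff_bound γ x hx ((n:ℤ)+1)
  have t5 : Real.sqrt (∑' k, b5 k ^ 2) ≤ ‖α‖ := sqrt_coeff_bound α x hx (n:ℤ)
  have chain : Real.sqrt (∑' k, (b1 k + (b2 k + (b3 k + (b4 k + b5 k)))) ^ 2)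
      ≤ Real.sqrt n * ‖A x‖ + C := by
    have m1 := minkowski sb1 sb2345
    have m2 := minkowski sb2 sb345
    have m3 := minkowski sb3 sb45
    have m4 := minkowski sb4 sb5
    rw [hCdef]
    linarith
  -- the total bound on ∑ ‖A (trunc n k x)‖²
  have hsummAy : Summable fun k : ℤ => ‖A (trunc n k x)‖ ^ 2 := by
    refine Summable.of_nonneg_of_le (fun k => sq_nonneg _) (fun k => ?_)
      ((summable_trunc_normSq n x).mul_left (‖A‖ ^ 2))
    have h := A.le_opNorm (trunc n k x)
    nlinarith [norm_nonneg (A (trunc n k x)), norm_nonneg (trunc n k x), norm_nonneg A]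
  have tote : ∑' k : ℤ, ‖A (trunc n k x)‖ ^ 2 ≤ (Real.sqrt n * s) ^ 2 := by
    have step1 : ∑' k : ℤ, ‖A (trunc n k x)‖ ^ 2
        ≤ ∑' k, (b1 k + (b2 k + (b3 k + (b4 k + b5 k)))) ^ 2 := by
      refine Summable.tsum_le_tsum (fun k => ?_) hsummAy sball
      have h := hAyle k
      have hnn : (0:ℝ) ≤ ‖A (trunc n k x)‖ := norm_nonneg _
      nlinarith
    have step2 : ∑' k, (b1 k + (b2 k + (b3 k + (b4 k + b5 k)))) ^ 2
        ≤ (Real.sqrt n * ‖A x‖ + C) ^ 2 := by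
      have hnn : 0 ≤ ∑' k, (b1 k + (b2 k + (b3 k + (b4 k + b5 k)))) ^ 2 :=
        tsum_nonneg fun k => sq_nonneg _
      have := Real.sq_sqrt hnn
      nlinarith [chain, Real.sqrt_nonneg (∑' k, (b1 k + (b2 k + (b3 k + (b4 k + b5 k)))) ^ 2)]
    have hseq : Real.sqrt n * s = Real.sqrt n * ‖A x‖ + C := by
      rw [hsdef, mul_add, mul_div_cancel₀ _ (ne_of_gt hsn)]
    rw [hseq]
    linarith
  -- choose a good window
  refine le_of_forall_pos_le_add fun ε hε => ?_
  have hexists : ∃ k : ℤ, trunc n k x ≠ 0 ∧ ‖A (trunc n k x)‖ ≤ (s + ε) * ‖trunc n k x‖ := by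
    by_contra hcon
    push_neg at hcon
    have hpt : ∀ k : ℤ, ((s + ε) * ‖trunc n k x‖) ^ 2 ≤ ‖A (trunc n k x)‖ ^ 2 := by
      intro k
      by_cases hk : trunc n k x = 0
      · rw [hk]
        simp
      · have h := hcon k hk
        have h0 : (0:ℝ) ≤ s + ε := by linarith
        have h1 : 0 ≤ (s + ε) * ‖trunc n k x‖ := mul_nonneg h0 (norm_nonneg _)
        exact pow_le_pow_left₀ h1 h.le 2
    have hsum1 : ∑' k : ℤ, ((s + ε) * ‖trunc n k x‖) ^ 2 = (s + ε) ^ 2 * (n : ℝ) := by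
      simp only [mul_pow]
      rw [tsum_mul_left, tsum_trunc_normSq n x, hx]
      ring
    have hsum2 : Summable fun k : ℤ => ((s + ε) * ‖trunc n k x‖) ^ 2 := by
      simp only [mul_pow]
      exact (summable_trunc_normSq n x).mul_left _
    have hle : (s + ε) ^ 2 * (n : ℝ) ≤ (Real.sqrt n * s) ^ 2 := by
      rw [← hsum1]
      exact le_trans (Summable.tsum_le_tsum hpt hsum2 hsummAy) tote
    rw [mul_pow, Real.sq_sqrt (le_of_lt hn0)] at hle
    have h2 : (s + ε) ^ 2 ≤ s ^ 2 :=
      le_of_mul_le_mul_right (by linarith [hle]) hn0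
    nlinarith [hsnn, hε]
  obtain ⟨k, hk0, hkle⟩ := hexists
  have hnz : ‖trunc n k x‖ ≠ 0 := norm_ne_zero_iff.mpr hk0
  have hnpos : 0 < ‖trunc n k x‖ := norm_pos_iff.mpr hk0
  set c : ℂ := ((‖trunc n k x‖⁻¹ : ℝ) : ℂ) with hc
  set z : L2Z := c • trunc n k x with hz
  have hznorm : ‖z‖ = 1 := by
    rw [hz, norm_smul, hc]
    rw [Complex.norm_real, Real.norm_eq_abs, abs_of_nonneg (by positivity)]
    exact inv_mul_cancel₀ hnz
  have hsupp : ∀ i : ℤ, z i ≠ 0 → k < i ∧ i ≤ k + n := by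
    intro i hi
    rw [hz] at hi
    have : (c • trunc n k x) i = c * (trunc n k x) i := by
      rw [lp.coeFn_smul]
      rfl
    rw [this] at hi
    have h2 : (trunc n k x) i ≠ 0 := fun h => hi (by rw [h, mul_zero])
    rw [trunc_apply] at h2
    by_contra hC
    rw [if_neg hC] at h2
    exact h2 rfl
  have hAz : ‖A z‖ ≤ s + ε := by
    rw [hz, map_smul, norm_smul, hc, Complex.norm_real, Real.norm_eq_abs,
      abs_of_nonneg (by positivity)]
    calc ‖trunc n k x‖⁻¹ * ‖A (trunc n k x)‖
        ≤ ‖trunc n k x‖⁻¹ * ((s + ε) * ‖trunc n k x‖) := by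
          apply mul_le_mul_of_nonneg_left hkle (by positivity)
      _ = s + ε := by field_simp
  calc nuN A n ≤ ‖A z‖ := by
        exact csInf_le (nuN_bdd A n) ⟨z, k, hznorm, hsupp, rfl⟩
    _ ≤ s + ε := hAz


theorem nuN_tendsto_lowerNorm
    (A : L2Z →L[ℂ] L2Z) (α β γ : lp (fun _ : ℤ => ℂ) ⊤) (hA : IsTridiag A α β γ) :
    Filter.Tendsto (fun n : ℕ => nuN A n) Filter.atTop (nhds (lowerNorm A)) := by
  have upper : ∀ n : ℕ, 1 ≤ n → nuN A n ≤ lowerNorm A + (2*‖α‖ + 2*‖γ‖) / Real.sqrt n := by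
    intro n hn
    refine le_of_forall_pos_le_add fun ε hε => ?_
    obtain ⟨r, ⟨x, hx1, hxr⟩, hrlt⟩ :=
      exists_lt_of_csInf_lt (lowerNorm_nonempty A) (lt_add_of_pos_right (lowerNorm A) hε)
    calc nuN A n ≤ ‖A x‖ + (2*‖α‖ + 2*‖γ‖) / Real.sqrt n := nuN_le_key A α β γ hA n hn x hx1
      _ ≤ lowerNorm A + (2*‖α‖ + 2*‖γ‖) / Real.sqrt n + ε := by
          rw [hxr] at hrlt; linarith
  have lower : ∀ n : ℕ, 1 ≤ n → lowerNorm A ≤ nuN A n := fun n hn => lowerNorm_le_nuN A n hn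
  have htend : Filter.Tendsto (fun n : ℕ => lowerNorm A + (2*‖α‖ + 2*‖γ‖) / Real.sqrt n)
      Filter.atTop (nhds (lowerNorm A)) := by
    have h1 : Filter.Tendsto (fun n : ℕ => Real.sqrt n) Filter.atTop Filter.atTop := by
      apply Filter.tendsto_atTop_atTop.mpr
      intro b
      refine ⟨⌈b⌉₊ ^ 2, fun n hn => ?_⟩
      have h1 : b ≤ (⌈b⌉₊ : ℝ) := Nat.le_ceil b
      have h2 : ((⌈b⌉₊ : ℝ)) = Real.sqrt ((⌈b⌉₊ : ℝ) ^ 2) := (Real.sqrt_sq (by positivity)).symm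
      have h3 : Real.sqrt ((⌈b⌉₊ : ℝ) ^ 2) ≤ Real.sqrt n := by
        apply Real.sqrt_le_sqrt
        push_cast
        exact_mod_cast Nat.cast_le.mpr hn
      linarith
    have h2 : Filter.Tendsto (fun n : ℕ => (2*‖α‖ + 2*‖γ‖) / Real.sqrt n)
        Filter.atTop (nhds 0) := by
      simp only [div_eq_mul_inv]
      rw [show (0:ℝ) = (2*‖α‖ + 2*‖γ‖) * 0 by ring]
      exact Filter.Tendsto.const_mul _ h1.inv_tendsto_atTop
    have h3 := (tendsto_const_nhds (x := lowerNorm A) (f := Filter.atTop (α := ℕ))).add h2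
    rwa [add_zero] at h3
  refine tendsto_of_tendsto_of_tendsto_of_le_of_le' tendsto_const_nhds htend ?_ ?_
  · filter_upwards [Filter.eventually_ge_atTop 1] with n hn using lower n hn
  · filter_upwards [Filter.eventually_ge_atTop 1] with n hn using upper n hn
end
end

section
/- Let A be a bounded band operator on ℓ²(ℤ,ℂ) of bandwidth w. Let A₋ be the bounded operator on ℓ²({…,−2,−1},ℂ) with matrix entries (A_{i,j})_{i,j ≤ −1}, and let A₊ be the bounded operator on ℓ²({1,2,…},ℂ) with matrix entries (A_{i,j})_{i,j ≥ 1}. Then spess(A) = spess(A₋) ∪ spess(A₊). -/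
set_option maxHeartbeats 1000000

noncomputable section

/-- The essential spectrum: λ such that `B - λI` is not invertible modulo compact operators. -/
def essSpec {H : Type*} [NormedAddCommGroup H] [NormedSpace ℂ H] (B : H →L[ℂ] H) : Set ℂ :=
  {z : ℂ | ¬ ∃ C : H →L[ℂ] H,
    IsCompactOperator (⇑(C.comp (B - z • (1 : H →L[ℂ] H)) - 1)) ∧
    IsCompactOperator (⇑((B - z • (1 : H →L[ℂ] H)).comp C - 1))}

abbrev L2Neg : Type := lp (fun _ : {i : ℤ // i ≤ -1} => ℂ) 2
abbrev L2Pos : Type := lp (fun _ : {i : ℤ // 1 ≤ i} => ℂ) 2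

namespace EssSplit

open scoped ENNReal

/-! ### Generic lemmas about `lp` over constant family `ℂ` -/

variable {ι : Type*} [DecidableEq ι] {κ : Type*} [DecidableEq κ]

lemma coord_eq_inner (f : lp (fun _ : ι => ℂ) 2) (i : ι) :
    (inner ℂ (lp.single 2 i (1:ℂ)) f : ℂ) = f i := by
  rw [lp.inner_single_left]
  simp

lemma ext_of_inner_single {f g : lp (fun _ : ι => ℂ) 2}
    (h : ∀ i, (inner ℂ (lp.single 2 i (1:ℂ)) f : ℂ) = inner ℂ (lp.single 2 i (1:ℂ)) g) :
    f = g := by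
  apply lp.ext; funext i
  have := h i
  rwa [coord_eq_inner, coord_eq_inner] at this

lemma clm_ext_of_entries {B C : lp (fun _ : ι => ℂ) 2 →L[ℂ] lp (fun _ : κ => ℂ) 2}
    (h : ∀ (i : κ) (j : ι), (inner ℂ (lp.single 2 i (1:ℂ)) (B (lp.single 2 j 1)) : ℂ)
        = inner ℂ (lp.single 2 i (1:ℂ)) (C (lp.single 2 j 1))) : B = C := by
  have hs : ∀ j : ι, B (lp.single 2 j 1) = C (lp.single 2 j 1) :=
    fun j => ext_of_inner_single (fun i => h i j)
  refine ContinuousLinearMap.ext fun x => ?_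
  have hx : HasSum (fun j : ι => lp.single 2 j (x j)) x :=
    lp.hasSum_single (by norm_num) x
  have e : ∀ j : ι, lp.single (E := fun _ : ι => ℂ) 2 j (x j) = x j • lp.single 2 j (1:ℂ) :=
    fun j => by
      have h1 := lp.single_smul (𝕜 := ℂ) (E := fun _ : ι => ℂ) 2 j (x j) (1:ℂ)
      rw [smul_eq_mul, mul_one] at h1
      exact h1
  have hB : HasSum (fun j : ι => B (lp.single 2 j (x j))) (B x) := hx.mapL B
  have hC : HasSum (fun j : ι => C (lp.single 2 j (x j))) (C x) := hx.mapL C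
  have : (fun j : ι => B (lp.single 2 j (x j))) = fun j => C (lp.single 2 j (x j)) :=
    funext fun j => by rw [e j, map_smul, map_smul, hs j]
  rw [this] at hB
  exact hB.unique hC

lemma isCompactOperator_smulRight {H₁ H₂ : Type*} [NormedAddCommGroup H₁] [NormedSpace ℂ H₁]
    [NormedAddCommGroup H₂] [NormedSpace ℂ H₂] (φ : H₁ →L[ℂ] ℂ) (u : H₂) :
    IsCompactOperator fun x => φ x • u := by
  refine ⟨(fun c : ℂ => c • u) '' Metric.closedBall 0 ‖φ‖, ?_, ?_⟩
  · exact (isCompact_closedBall 0 ‖φ‖).image (continuous_id.smul continuous_const)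
  · refine Filter.mem_of_superset (Metric.closedBall_mem_nhds (0:H₁) one_pos) ?_
    intro x hx
    refine Set.mem_image_of_mem _ ?_
    rw [Metric.mem_closedBall, dist_zero_right]
    calc ‖φ x‖ ≤ ‖φ‖ * ‖x‖ := φ.le_opNorm x
    _ ≤ ‖φ‖ * 1 := by
        have : ‖x‖ ≤ 1 := mem_closedBall_zero_iff.mp hx
        exact mul_le_mul_of_nonneg_left this (norm_nonneg _)
    _ = ‖φ‖ := mul_one _

lemma isCompactOperator_sum {X : Type*} {H₁ H₂ : Type*} [NormedAddCommGroup H₁]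
    [NormedSpace ℂ H₁] [NormedAddCommGroup H₂] [NormedSpace ℂ H₂]
    (s : Finset X) (f : X → (H₁ →L[ℂ] H₂)) (h : ∀ x ∈ s, IsCompactOperator ⇑(f x)) :
    IsCompactOperator ⇑(∑ x ∈ s, f x) := by
  classical
  induction s using Finset.cons_induction with
  | empty => simpa using (isCompactOperator_zero : IsCompactOperator (fun _ : H₁ => (0:H₂)))
  | cons a s ha ih =>
    rw [Finset.sum_cons]
    have h1 : IsCompactOperator ⇑(f a) := h a (Finset.mem_cons_self a s)
    have h2 : IsCompactOperator ⇑(∑ x ∈ s, f x) := ih (fun x hx => h x (Finset.mem_cons_of_mem hx))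
    have : ⇑(f a + ∑ x ∈ s, f x) = ⇑(f a) + ⇑(∑ x ∈ s, f x) := rfl
    rw [this]
    exact h1.add h2

lemma single_coord (i i' : ι) :
    (lp.single (E := fun _ : ι => ℂ) 2 i (1:ℂ)) i' = if i' = i then 1 else 0 := by
  by_cases h : i' = i
  · subst h; rw [lp.single_apply_self]; simp
  · rw [lp.single_apply_ne _ _ _ h]; simp [h]

lemma isCompactOperator_of_finite_entries
    (B : lp (fun _ : ι => ℂ) 2 →L[ℂ] lp (fun _ : κ => ℂ) 2) (F : Finset ι) (G : Finset κ)
    (h : ∀ (i : κ) (j : ι), (i ∉ G ∨ j ∉ F) →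
      (inner ℂ (lp.single 2 i (1:ℂ)) (B (lp.single 2 j 1)) : ℂ) = 0) :
    IsCompactOperator ⇑B := by
  classical
  set T : lp (fun _ : ι => ℂ) 2 →L[ℂ] lp (fun _ : κ => ℂ) 2 :=
    ∑ j ∈ F, ∑ i ∈ G,
      (innerSL ℂ (lp.single 2 j (1:ℂ))).smulRight
        ((inner ℂ (lp.single 2 i (1:ℂ)) (B (lp.single 2 j 1)) : ℂ) • lp.single 2 i (1:ℂ)) with hT
  have hBT : B = T := by
    refine clm_ext_of_entries fun i' j' => ?_
    rw [coord_eq_inner, coord_eq_inner]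
    have hsum : (T (lp.single 2 j' 1)) i'
        = ∑ j ∈ F, ∑ i ∈ G, (if j = j' then (1:ℂ) else 0) *
            (((B (lp.single 2 j 1)) : ∀ _ : κ, ℂ) i * (if i' = i then 1 else 0)) := by
      rw [hT]
      simp only [ContinuousLinearMap.sum_apply, lp.coeFn_sum, Finset.sum_apply,
        ContinuousLinearMap.smulRight_apply, innerSL_apply_apply, lp.coeFn_smul, Pi.smul_apply,
        smul_eq_mul, coord_eq_inner, single_coord]
    rw [hsum]
    by_cases hj : j' ∈ F
    · by_cases hi : i' ∈ G
      · rw [Finset.sum_eq_single j']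
        · rw [Finset.sum_eq_single i']
          · simp
          · intro i hiG hne; simp [Ne.symm hne]
          · intro hc; exact absurd hi hc
        · intro j hjF hne; simp [hne]
        · intro hc; exact absurd hj hc
      · have h0 := h i' j' (Or.inl hi)
        rw [coord_eq_inner] at h0
        rw [h0]
        refine (Finset.sum_eq_zero fun j hjF => Finset.sum_eq_zero fun i hiG => ?_).symm
        have : i' ≠ i := fun hc => (hc ▸ hi) hiG
        simp [this]
    · have h0 := h i' j' (Or.inr hj)
      rw [coord_eq_inner] at h0
      rw [h0]
      refine (Finset.sum_eq_zero fun j hjF => ?_).symm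
      have : j ≠ j' := fun hc => hj (hc ▸ hjF)
      simp [this]
  rw [hBT]
  refine isCompactOperator_sum _ _ fun j _ => isCompactOperator_sum _ _ fun i _ => ?_
  exact isCompactOperator_smulRight _ _

/-! ### Extension and restriction operators -/

variable (p : ℤ → Prop) [DecidablePred p]

abbrev L2S : Type := lp (fun _ : Subtype p => ℂ) 2

lemma t2pos : (0:ℝ) < (2:ℝ≥0∞).toReal := by norm_num

def extFun (x : L2S p) : ∀ _ : ℤ, ℂ := fun i => if h : p i then x ⟨i, h⟩ else 0

lemma memℓp_extFun (x : L2S p) : Memℓp (extFun p x) 2 := by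
  apply memℓp_gen
  have hx : Summable fun i : Subtype p => ‖x i‖ ^ (2:ℝ≥0∞).toReal :=
    (memℓp_gen_iff t2pos).mp (lp.memℓp x)
  have hind : Set.indicator {i | p i} (fun i : ℤ => ‖extFun p x i‖ ^ (2:ℝ≥0∞).toReal)
      = fun i : ℤ => ‖extFun p x i‖ ^ (2:ℝ≥0∞).toReal := by
    funext i
    by_cases h : p i
    · exact Set.indicator_of_mem h _
    · rw [Set.indicator_of_notMem (show i ∉ {i | p i} from h)]
      simp [extFun, h, Real.zero_rpow (ne_of_gt t2pos)]
  rw [← hind]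
  apply summable_subtype_iff_indicator.mp
  refine hx.congr fun i => ?_
  simp [extFun, i.2]

def extL : L2S p →ₗ[ℂ] L2Z where
  toFun x := ⟨extFun p x, memℓp_extFun p x⟩
  map_add' x y := by
    apply lp.ext; funext i
    by_cases h : p i <;> simp [extFun, h, lp.coeFn_add, Pi.add_apply] <;>
      change _ = extFun p x i + extFun p y i <;> simp [extFun, h]
  map_smul' c x := by
    apply lp.ext; funext i
    by_cases h : p i <;> simp [extFun, h, lp.coeFn_smul, Pi.smul_apply]

lemma extL_apply (x : L2S p) (i : ℤ) :
    (extL p x : ∀ _ : ℤ, ℂ) i = if h : p i then x ⟨i, h⟩ else 0 := rfl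

lemma norm_extL (x : L2S p) : ‖extL p x‖ = ‖x‖ := by
  have hJ := lp.hasSum_norm (t2pos) (extL p x)
  have hx := lp.hasSum_norm (t2pos) x
  have hind : Set.indicator {i | p i} (fun i : ℤ => ‖(extL p x : ∀ _ : ℤ, ℂ) i‖ ^ (2:ℝ≥0∞).toReal)
      = fun i : ℤ => ‖(extL p x : ∀ _ : ℤ, ℂ) i‖ ^ (2:ℝ≥0∞).toReal := by
    funext i
    by_cases h : p i
    · exact Set.indicator_of_mem h _
    · rw [Set.indicator_of_notMem (show i ∉ {i | p i} from h)]
      simp [extL_apply, h, Real.zero_rpow (ne_of_gt t2pos)]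
  rw [← hind] at hJ
  have hJ' := hasSum_subtype_iff_indicator.mpr hJ
  have : (fun i : ({i | p i} : Set ℤ) => ‖(extL p x : ∀ _ : ℤ, ℂ) ↑i‖ ^ (2:ℝ≥0∞).toReal)
      = fun i => ‖x i‖ ^ (2:ℝ≥0∞).toReal := by
    funext i
    have hi : p ↑i := i.2
    simp [extL_apply, hi]
  rw [show ((fun i : ℤ => ‖(extL p x : ∀ _ : ℤ, ℂ) i‖ ^ (2:ℝ≥0∞).toReal) ∘ (↑) :
      ({i | p i} : Set ℤ) → ℝ) = fun i => ‖x i‖ ^ (2:ℝ≥0∞).toReal from this] at hJ'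
  have heq := hJ'.unique hx
  exact Real.rpow_left_injOn (ne_of_gt (t2pos)) (norm_nonneg _) (norm_nonneg _) heq

def extCLM : L2S p →L[ℂ] L2Z :=
  (extL p).mkContinuous 1 (fun x => by rw [norm_extL, one_mul])

lemma extCLM_apply (x : L2S p) (i : ℤ) :
    (extCLM p x : ∀ _ : ℤ, ℂ) i = if h : p i then x ⟨i, h⟩ else 0 := rfl

def restL : L2Z →ₗ[ℂ] L2S p where
  toFun x := ⟨fun i => x ↑i, by
    apply memℓp_gen
    exact ((memℓp_gen_iff (t2pos)).mp (lp.memℓp x)).subtype {i | p i}⟩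
  map_add' x y := by apply lp.ext; funext i; simp [lp.coeFn_add, Pi.add_apply]; rfl
  map_smul' c x := by apply lp.ext; funext i; simp [lp.coeFn_smul, Pi.smul_apply]

lemma norm_restL (x : L2Z) : ‖restL p x‖ ≤ ‖x‖ := by
  have hR := lp.hasSum_norm (t2pos) (restL p x)
  have hx := lp.hasSum_norm (t2pos) x
  have hR' : HasSum ((fun i : ℤ => ‖(x : ∀ _ : ℤ, ℂ) i‖ ^ (2:ℝ≥0∞).toReal) ∘ (↑) :
      ({i | p i} : Set ℤ) → ℝ) (‖restL p x‖ ^ (2:ℝ≥0∞).toReal) := hR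
  rw [hasSum_subtype_iff_indicator] at hR'
  have hle := hasSum_le (fun i => Set.indicator_le_self'
    (fun i _ => Real.rpow_nonneg (norm_nonneg _) _) i) hR' hx
  by_contra hcon
  push_neg at hcon
  have := Real.rpow_lt_rpow (norm_nonneg x) hcon (t2pos)
  linarith

def restCLM : L2Z →L[ℂ] L2S p :=
  (restL p).mkContinuous 1 (fun x => by rw [one_mul]; exact norm_restL p x)

lemma restCLM_apply (x : L2Z) (i : Subtype p) :
    (restCLM p x : ∀ _ : Subtype p, ℂ) i = (x : ∀ _ : ℤ, ℂ) ↑i := rfl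

lemma rest_ext_same (y : L2S p) : restCLM p (extCLM p y) = y := by
  apply lp.ext; funext i
  have hi : p ↑i := i.2
  rw [restCLM_apply, extCLM_apply, dif_pos hi]

lemma ext_single (j : Subtype p) :
    extCLM p (lp.single 2 j 1) = lp.single (E := fun _ : ℤ => ℂ) 2 (↑j) 1 := by
  apply lp.ext; funext i
  rw [extCLM_apply, single_coord]
  by_cases h : p i
  · rw [dif_pos h, single_coord]
    by_cases hij : i = ↑j
    · have : (⟨i, h⟩ : Subtype p) = j := Subtype.ext hij
      simp [hij, this]
    · have : (⟨i, h⟩ : Subtype p) ≠ j := fun hc => hij (congrArg Subtype.val hc)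
      simp [hij, this]
  · rw [dif_neg h]
    have : i ≠ ↑j := fun hc => h (hc ▸ j.2)
    simp [this]

variable (q : ℤ → Prop) [DecidablePred q]

lemma rest_ext_zero (h : ∀ i, q i → ¬ p i) (y : L2S p) :
    restCLM q (extCLM p y) = 0 := by
  apply lp.ext; funext i
  have hi : ¬ p ↑i := h ↑i i.2
  rw [restCLM_apply, extCLM_apply, dif_neg hi]
  simp [lp.coeFn_zero]

lemma compress_entry (A : L2Z →L[ℂ] L2Z) (i : Subtype q) (j : Subtype p) :
    (inner ℂ (lp.single 2 i (1:ℂ))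
      (((restCLM q).comp (A.comp (extCLM p))) (lp.single 2 j 1)) : ℂ) = ent A ↑i ↑j := by
  rw [coord_eq_inner, ent, coord_eq_inner, ContinuousLinearMap.comp_apply,
    ContinuousLinearMap.comp_apply, ext_single, restCLM_apply]

lemma isCompact_compress (A : L2Z →L[ℂ] L2Z) (F G : Finset ℤ)
    (hz : ∀ i j : ℤ, q i → p j → (i ∉ G ∨ j ∉ F) → ent A i j = 0) :
    IsCompactOperator ⇑((restCLM q).comp (A.comp (extCLM p))) := by
  apply isCompactOperator_of_finite_entries _ (F.subtype p) (G.subtype q)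
  intro i j hij
  rw [compress_entry]
  refine hz ↑i ↑j i.2 j.2 ?_
  rcases hij with h | h
  · left; intro hc; exact h (Finset.mem_subtype.mpr hc)
  · right; intro hc; exact h (Finset.mem_subtype.mpr hc)

/-! ### The three pieces -/

abbrev Jm : L2Neg →L[ℂ] L2Z := extCLM (fun i : ℤ => i ≤ -1)
abbrev Rm : L2Z →L[ℂ] L2Neg := restCLM (fun i : ℤ => i ≤ -1)
abbrev L2Zer : Type := lp (fun _ : {i : ℤ // i = 0} => ℂ) 2
abbrev J0 : L2Zer →L[ℂ] L2Z := extCLM (fun i : ℤ => i = 0)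
abbrev R0 : L2Z →L[ℂ] L2Zer := restCLM (fun i : ℤ => i = 0)
abbrev Jp : L2Pos →L[ℂ] L2Z := extCLM (fun i : ℤ => 1 ≤ i)
abbrev Rp : L2Z →L[ℂ] L2Pos := restCLM (fun i : ℤ => 1 ≤ i)

lemma RmJm (y : L2Neg) : Rm (Jm y) = y := rest_ext_same _ y
lemma R0J0 (y : L2Zer) : R0 (J0 y) = y := rest_ext_same _ y
lemma RpJp (y : L2Pos) : Rp (Jp y) = y := rest_ext_same _ y
lemma R0Jm (y : L2Neg) : R0 (Jm y) = 0 := rest_ext_zero _ _ (by intro i h1 h2; omega) y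
lemma RpJm (y : L2Neg) : Rp (Jm y) = 0 := rest_ext_zero _ _ (by intro i h1 h2; omega) y
lemma RmJ0 (y : L2Zer) : Rm (J0 y) = 0 := rest_ext_zero _ _ (by intro i h1 h2; omega) y
lemma RpJ0 (y : L2Zer) : Rp (J0 y) = 0 := rest_ext_zero _ _ (by intro i h1 h2; omega) y
lemma RmJp (y : L2Pos) : Rm (Jp y) = 0 := rest_ext_zero _ _ (by intro i h1 h2; omega) y
lemma R0Jp (y : L2Pos) : R0 (Jp y) = 0 := rest_ext_zero _ _ (by intro i h1 h2; omega) y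

lemma Psum (x : L2Z) : Jm (Rm x) + J0 (R0 x) + Jp (Rp x) = x := by
  apply lp.ext; funext i
  simp only [lp.coeFn_add, Pi.add_apply, extCLM_apply]
  rcases lt_trichotomy i 0 with h | h | h
  · rw [dif_pos (show i ≤ -1 by omega), dif_neg (show ¬ i = 0 by omega),
      dif_neg (show ¬ 1 ≤ i by omega), restCLM_apply]
    simp
  · rw [dif_neg (show ¬ i ≤ -1 by omega), dif_pos (show i = 0 by omega),
      dif_neg (show ¬ 1 ≤ i by omega), restCLM_apply]
    simp
  · rw [dif_neg (show ¬ i ≤ -1 by omega), dif_neg (show ¬ i = 0 by omega),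
      dif_pos (show 1 ≤ i by omega), restCLM_apply]
    simp

/-- Block-diagonal part of `A`. -/
def DD (A : L2Z →L[ℂ] L2Z) : L2Z →L[ℂ] L2Z :=
  Jm.comp ((Rm.comp (A.comp Jm)).comp Rm) + J0.comp ((R0.comp (A.comp J0)).comp R0)
    + Jp.comp ((Rp.comp (A.comp Jp)).comp Rp)

lemma essSpec_eq_of_compact_sub {H : Type*} [NormedAddCommGroup H] [NormedSpace ℂ H]
    {B B' : H →L[ℂ] H} (h : IsCompactOperator ⇑(B - B')) : essSpec B = essSpec B' := by
  have main : ∀ (B₁ B₂ : H →L[ℂ] H), IsCompactOperator ⇑(B₁ - B₂) → ∀ z : ℂ,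
      (∃ C : H →L[ℂ] H,
        IsCompactOperator (⇑(C.comp (B₁ - z • (1 : H →L[ℂ] H)) - 1)) ∧
        IsCompactOperator (⇑((B₁ - z • (1 : H →L[ℂ] H)).comp C - 1))) →
      (∃ C : H →L[ℂ] H,
        IsCompactOperator (⇑(C.comp (B₂ - z • (1 : H →L[ℂ] H)) - 1)) ∧
        IsCompactOperator (⇑((B₂ - z • (1 : H →L[ℂ] H)).comp C - 1))) := by
    intro B₁ B₂ hK z ⟨C, h1, h2⟩
    refine ⟨C, ?_, ?_⟩
    · have key : C.comp (B₂ - z • (1 : H →L[ℂ] H)) - 1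
          = (C.comp (B₁ - z • (1 : H →L[ℂ] H)) - 1) - C.comp (B₁ - B₂) := by
        simp only [← ContinuousLinearMap.mul_def]
        noncomm_ring
      rw [key]
      exact h1.sub (hK.clm_comp C)
    · have key : (B₂ - z • (1 : H →L[ℂ] H)).comp C - 1
          = ((B₁ - z • (1 : H →L[ℂ] H)).comp C - 1) - (B₁ - B₂).comp C := by
        simp only [← ContinuousLinearMap.mul_def]
        noncomm_ring
      rw [key]
      exact h2.sub (hK.comp_clm C)
  have h' : IsCompactOperator ⇑(B' - B) := by
    have : B' - B = -(B - B) + (B - B') * 0 + (B - B') * 0 - (B - B') + (B - B) := by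
      noncomm_ring
    have hneg : IsCompactOperator ⇑(-(B - B')) := by
      have := h.neg
      have hcoe : ⇑(-(B - B')) = -⇑(B - B') := rfl
      rw [hcoe]; exact this
    have : B' - B = -(B - B') := by noncomm_ring
    rw [this]; exact hneg
  ext z
  simp only [essSpec, Set.mem_setOf_eq, not_iff_not]
  exact ⟨main B B' h z, main B' B h' z⟩

end EssSplit

open EssSplit

theorem essential_spectrum_splits
    (w : ℕ) (A : L2Z →L[ℂ] L2Z)
    (hband : ∀ i j : ℤ, (w : ℤ) < |i - j| → ent A i j = 0)
    (Am : L2Neg →L[ℂ] L2Neg)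
    (hAm : ∀ i j : {i : ℤ // i ≤ -1},
      (inner ℂ (lp.single 2 i (1:ℂ)) (Am (lp.single 2 j 1)) : ℂ) = ent A i j)
    (Ap : L2Pos →L[ℂ] L2Pos)
    (hAp : ∀ i j : {i : ℤ // 1 ≤ i},
      (inner ℂ (lp.single 2 i (1:ℂ)) (Ap (lp.single 2 j 1)) : ℂ) = ent A i j) :
    essSpec A = essSpec Am ∪ essSpec Ap := by
  classical
  -- the compressions agree with Am, Ap
  have hAmeq : Am = Rm.comp (A.comp Jm) :=
    clm_ext_of_entries fun i j => by rw [hAm i j, compress_entry]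
  have hApeq : Ap = Rp.comp (A.comp Jp) :=
    clm_ext_of_entries fun i j => by rw [hAp i j, compress_entry]
  -- A - DD A is compact
  have hband' : ∀ i j : ℤ, ent A i j ≠ 0 → -(w:ℤ) ≤ i - j ∧ i - j ≤ (w:ℤ) := by
    intro i j hne
    have hb : |i - j| ≤ (w:ℤ) := not_lt.mp fun hlt => hne (hband i j hlt)
    rwa [abs_le] at hb
  -- compact cross compressions
  have hc_m0 : IsCompactOperator ⇑(Rm.comp (A.comp J0)) :=
    isCompact_compress _ _ A (Finset.Icc 0 0) (Finset.Icc (-(w:ℤ)) (-1)) (by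
      intro i j hi hj hnot
      by_contra hne
      have hb := hband' i j hne
      simp only [Finset.mem_Icc, not_and_or, not_le] at hnot
      omega)
  have hc_mp : IsCompactOperator ⇑(Rm.comp (A.comp Jp)) :=
    isCompact_compress _ _ A (Finset.Icc 1 (w:ℤ)) (Finset.Icc (-(w:ℤ)) (-1)) (by
      intro i j hi hj hnot
      by_contra hne
      have hb := hband' i j hne
      simp only [Finset.mem_Icc, not_and_or, not_le] at hnot
      omega)
  have hc_0m : IsCompactOperator ⇑(R0.comp (A.comp Jm)) :=
    isCompact_compress _ _ A (Finset.Icc (-(w:ℤ)) (-1)) (Finset.Icc 0 0) (by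
      intro i j hi hj hnot
      by_contra hne
      have hb := hband' i j hne
      simp only [Finset.mem_Icc, not_and_or, not_le] at hnot
      omega)
  have hc_0p : IsCompactOperator ⇑(R0.comp (A.comp Jp)) :=
    isCompact_compress _ _ A (Finset.Icc 1 (w:ℤ)) (Finset.Icc 0 0) (by
      intro i j hi hj hnot
      by_contra hne
      have hb := hband' i j hne
      simp only [Finset.mem_Icc, not_and_or, not_le] at hnot
      omega)
  have hc_pm : IsCompactOperator ⇑(Rp.comp (A.comp Jm)) :=
    isCompact_compress _ _ A (Finset.Icc (-(w:ℤ)) (-1)) (Finset.Icc 1 (w:ℤ)) (by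
      intro i j hi hj hnot
      by_contra hne
      have hb := hband' i j hne
      simp only [Finset.mem_Icc, not_and_or, not_le] at hnot
      omega)
  have hc_p0 : IsCompactOperator ⇑(Rp.comp (A.comp J0)) :=
    isCompact_compress _ _ A (Finset.Icc 0 0) (Finset.Icc 1 (w:ℤ)) (by
      intro i j hi hj hnot
      by_contra hne
      have hb := hband' i j hne
      simp only [Finset.mem_Icc, not_and_or, not_le] at hnot
      omega)
  -- A minus its block-diagonal part is the sum of the six cross terms
  have hrep : A - DD A =
      Jm.comp ((Rm.comp (A.comp J0)).comp R0) + Jm.comp ((Rm.comp (A.comp Jp)).comp Rp)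
      + J0.comp ((R0.comp (A.comp Jm)).comp Rm) + J0.comp ((R0.comp (A.comp Jp)).comp Rp)
      + Jp.comp ((Rp.comp (A.comp Jm)).comp Rm) + Jp.comp ((Rp.comp (A.comp J0)).comp R0) := by
    refine ContinuousLinearMap.ext fun x => ?_
    simp only [DD, ContinuousLinearMap.sub_apply, ContinuousLinearMap.add_apply,
      ContinuousLinearMap.comp_apply]
    set am := A (Jm (Rm x)) with ham
    set a0 := A (J0 (R0 x)) with ha0
    set ap2 := A (Jp (Rp x)) with hap2
    have e1 : A x = am + a0 + ap2 := by rw [ham, ha0, hap2, ← map_add, ← map_add, Psum]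
    rw [e1, ← Psum am, ← Psum a0, ← Psum ap2]
    simp only [map_add, RmJm, R0J0, RpJp, R0Jm, RpJm, RmJ0, RpJ0, RmJp, R0Jp,
      map_zero, add_zero, zero_add]
    abel
  have hAD : IsCompactOperator ⇑(A - DD A) := by
    rw [hrep]
    exact (((((((hc_m0.comp_clm R0).clm_comp Jm).add
      ((hc_mp.comp_clm Rp).clm_comp Jm)).add
      ((hc_0m.comp_clm Rm).clm_comp J0)).add
      ((hc_0p.comp_clm Rp).clm_comp J0)).add
      ((hc_pm.comp_clm Rm).clm_comp Jp)).add
      ((hc_p0.comp_clm R0).clm_comp Jp))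
  have hEss1 : essSpec A = essSpec (DD A) :=
    essSpec_eq_of_compact_sub hAD
  -- pointwise structure of DD A
  have hDJm : ∀ y : L2Neg, DD A (Jm y) = Jm (Am y) := by
    intro y
    simp only [DD, ContinuousLinearMap.add_apply, ContinuousLinearMap.comp_apply,
      RmJm, R0Jm, RpJm, map_zero, add_zero, zero_add]
    rw [hAmeq]
    rfl
  have hDJp : ∀ y : L2Pos, DD A (Jp y) = Jp (Ap y) := by
    intro y
    simp only [DD, ContinuousLinearMap.add_apply, ContinuousLinearMap.comp_apply,
      RpJp, RmJp, R0Jp, map_zero, add_zero, zero_add]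
    rw [hApeq]
    rfl
  have hRmD : ∀ x : L2Z, Rm (DD A x) = Am (Rm x) := by
    intro x
    simp only [DD, ContinuousLinearMap.add_apply, ContinuousLinearMap.comp_apply,
      map_add, RmJm, RmJ0, RmJp, map_zero, add_zero, zero_add]
    rw [hAmeq]
    rfl
  have hRpD : ∀ x : L2Z, Rp (DD A x) = Ap (Rp x) := by
    intro x
    simp only [DD, ContinuousLinearMap.add_apply, ContinuousLinearMap.comp_apply,
      map_add, RpJp, RpJm, RpJ0, map_zero, add_zero, zero_add]
    rw [hApeq]
    rfl
  -- J0.comp R0 is compact (rank one)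
  have hJ0R0 : IsCompactOperator ⇑(J0.comp (R0 : L2Z →L[ℂ] L2Zer)) := by
    apply isCompactOperator_of_finite_entries _ ({0} : Finset ℤ) ({0} : Finset ℤ)
    intro i j hij
    rw [coord_eq_inner, ContinuousLinearMap.comp_apply, extCLM_apply]
    rcases hij with h | h
    · have hi : ¬ i = 0 := by simpa using h
      rw [dif_neg hi]
    · have hj : ¬ j = 0 := by simpa using h
      by_cases hi : i = 0
      · rw [dif_pos hi, restCLM_apply, single_coord]
        have : i ≠ j := by omega
        simp [this]
      · rw [dif_neg hi]
  -- main equivalence for the block-diagonal operator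
  rw [hEss1]
  ext z
  simp only [essSpec, Set.mem_setOf_eq, Set.mem_union]
  constructor
  · intro hD
    by_contra hc
    push_neg at hc
    obtain ⟨hm, hp⟩ := hc
    obtain ⟨Cm, hm1, hm2⟩ := hm
    obtain ⟨Cp, hp1, hp2⟩ := hp
    refine hD ⟨Jm.comp (Cm.comp Rm) + Jp.comp (Cp.comp Rp), ?_, ?_⟩
    · have key3 : (Jm.comp (Cm.comp Rm) + Jp.comp (Cp.comp Rp)).comp
          (DD A - z • (1 : L2Z →L[ℂ] L2Z)) - 1
          = Jm.comp ((Cm.comp (Am - z • (1 : L2Neg →L[ℂ] L2Neg)) - 1).comp Rm)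
            + Jp.comp ((Cp.comp (Ap - z • (1 : L2Pos →L[ℂ] L2Pos)) - 1).comp Rp)
            - J0.comp R0 := by
        refine ContinuousLinearMap.ext fun x => ?_
        simp only [ContinuousLinearMap.sub_apply, ContinuousLinearMap.add_apply,
          ContinuousLinearMap.comp_apply, ContinuousLinearMap.one_apply,
          ContinuousLinearMap.smul_apply, map_sub, map_smul, hRmD, hRpD, smul_add]
        set u := Rm x with hu
        set v := R0 x with hv
        set t := Rp x with ht
        have hx : Jm u + J0 v + Jp t = x := Psum x
        rw [← hx]
        abel
      rw [key3]
      exact (((hm1.comp_clm Rm).clm_comp Jm).add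
        ((hp1.comp_clm Rp).clm_comp Jp)).sub hJ0R0
    · have key4 : (DD A - z • (1 : L2Z →L[ℂ] L2Z)).comp
          (Jm.comp (Cm.comp Rm) + Jp.comp (Cp.comp Rp)) - 1
          = Jm.comp (((Am - z • (1 : L2Neg →L[ℂ] L2Neg)).comp Cm - 1).comp Rm)
            + Jp.comp (((Ap - z • (1 : L2Pos →L[ℂ] L2Pos)).comp Cp - 1).comp Rp)
            - J0.comp R0 := by
        refine ContinuousLinearMap.ext fun x => ?_
        simp only [ContinuousLinearMap.sub_apply, ContinuousLinearMap.add_apply,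
          ContinuousLinearMap.comp_apply, ContinuousLinearMap.one_apply,
          ContinuousLinearMap.smul_apply, map_add, map_sub, map_smul, hDJm, hDJp, smul_add]
        set u := Rm x with hu
        set v := R0 x with hv
        set t := Rp x with ht
        have hx : Jm u + J0 v + Jp t = x := Psum x
        rw [← hx]
        abel
      rw [key4]
      exact (((hm2.comp_clm Rm).clm_comp Jm).add
        ((hp2.comp_clm Rp).clm_comp Jp)).sub hJ0R0
  · intro hor hex
    obtain ⟨C, h1, h2⟩ := hex
    rcases hor with hm | hp
    · refine hm ⟨Rm.comp (C.comp Jm), ?_, ?_⟩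
      · have key1 : (Rm.comp (C.comp Jm)).comp (Am - z • (1 : L2Neg →L[ℂ] L2Neg)) - 1
            = Rm.comp ((C.comp (DD A - z • (1 : L2Z →L[ℂ] L2Z)) - 1).comp Jm) := by
          refine ContinuousLinearMap.ext fun y => ?_
          simp only [ContinuousLinearMap.sub_apply, ContinuousLinearMap.add_apply,
            ContinuousLinearMap.comp_apply, ContinuousLinearMap.one_apply,
            ContinuousLinearMap.smul_apply, map_sub, map_smul, hDJm, RmJm]
        rw [key1]
        exact (h1.comp_clm Jm).clm_comp Rm
      · have key2 : (Am - z • (1 : L2Neg →L[ℂ] L2Neg)).comp (Rm.comp (C.comp Jm)) - 1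
            = Rm.comp (((DD A - z • (1 : L2Z →L[ℂ] L2Z)).comp C - 1).comp Jm) := by
          refine ContinuousLinearMap.ext fun y => ?_
          simp only [ContinuousLinearMap.sub_apply, ContinuousLinearMap.add_apply,
            ContinuousLinearMap.comp_apply, ContinuousLinearMap.one_apply,
            ContinuousLinearMap.smul_apply, map_sub, map_smul, hRmD, RmJm]
        rw [key2]
        exact (h2.comp_clm Jm).clm_comp Rm
    · refine hp ⟨Rp.comp (C.comp Jp), ?_, ?_⟩
      · have key1 : (Rp.comp (C.comp Jp)).comp (Ap - z • (1 : L2Pos →L[ℂ] L2Pos)) - 1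
            = Rp.comp ((C.comp (DD A - z • (1 : L2Z →L[ℂ] L2Z)) - 1).comp Jp) := by
          refine ContinuousLinearMap.ext fun y => ?_
          simp only [ContinuousLinearMap.sub_apply, ContinuousLinearMap.add_apply,
            ContinuousLinearMap.comp_apply, ContinuousLinearMap.one_apply,
            ContinuousLinearMap.smul_apply, map_sub, map_smul, hDJp, RpJp]
        rw [key1]
        exact (h1.comp_clm Jp).clm_comp Rp
      · have key2 : (Ap - z • (1 : L2Pos →L[ℂ] L2Pos)).comp (Rp.comp (C.comp Jp)) - 1
            = Rp.comp (((DD A - z • (1 : L2Z →L[ℂ] L2Z)).comp C - 1).comp Jp) := by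
          refine ContinuousLinearMap.ext fun y => ?_
          simp only [ContinuousLinearMap.sub_apply, ContinuousLinearMap.add_apply,
            ContinuousLinearMap.comp_apply, ContinuousLinearMap.one_apply,
            ContinuousLinearMap.smul_apply, map_sub, map_smul, hRpD, RpJp]
        rw [key2]
        exact (h2.comp_clm Jp).clm_comp Rp
end
end
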